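/- Let Δf₁(t_n) denote the nadir value (2HR/(T_d D²))·ln(T_d D ΔP_{L1}/(2HR) + 1) - ΔP_{L1}/D with H, D, R, T_d, ΔP_{L1} > 0. Then |Δf₁(t_n)| is strictly decreasing in H, i.e., ∂|Δf₁(t_n)|/∂H < 0. -/

import Mathlib

theorem stmt_9 (D P1 R Td : ℝ) (hD : 0 < D) (hR : 0 < R) (hTd : 0 < Td)
    (hP1 : 0 < P1) :
    StrictAntiOn
      (fun H : ℝ =>
        P1 / D - (2 * H * R / (Td * D ^ 2)) * Real.log (Td * D * P1 / (2 * H * R) + 1))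
      (Set.Ioi 0) := by
  set a : ℝ := Td * D * P1 / (2 * R) with ha
  have ha0 : 0 < a := by positivity
  set k : ℝ := 2 * R / (Td * D ^ 2) with hk
  have hk0 : 0 < k := by positivity
  have hfun : (fun H : ℝ =>
      P1 / D - (2 * H * R / (Td * D ^ 2)) * Real.log (Td * D * P1 / (2 * H * R) + 1))
      = fun H : ℝ => P1 / D - (k * H) * Real.log (a * H⁻¹ + 1) := by
    funext H
    rcases eq_or_ne H 0 with rfl | hH
    · simp
    · have h1 : 2 * H * R / (Td * D ^ 2) = k * H := by rw [hk]; ring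
      have h2 : Td * D * P1 / (2 * H * R) = a * H⁻¹ := by
        rw [ha]; field_simp
      rw [h1, h2]
  rw [hfun]
  have key : ∀ x ∈ Set.Ioi (0:ℝ),
      HasDerivAt (fun H : ℝ => P1 / D - (k * H) * Real.log (a * H⁻¹ + 1))
        (-(k * (Real.log (a * x⁻¹ + 1) - a / (a + x)))) x := by
    intro x hx
    have hx0 : 0 < x := hx
    have hxne : x ≠ 0 := ne_of_gt hx0
    have hv : 0 < a * x⁻¹ + 1 := by positivity
    have hinner : HasDerivAt (fun y : ℝ => a * y⁻¹ + 1) (a * (-(x ^ 2)⁻¹)) x :=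
      ((hasDerivAt_inv hxne).const_mul a).add_const 1
    have hlog : HasDerivAt (fun y : ℝ => Real.log (a * y⁻¹ + 1))
        ((a * (-(x ^ 2)⁻¹)) / (a * x⁻¹ + 1)) x := hinner.log (ne_of_gt hv)
    have hlin : HasDerivAt (fun y : ℝ => k * y) (k * 1) x :=
      (hasDerivAt_id x).const_mul k
    have hmul := hlin.mul hlog
    have := hmul.const_sub (P1 / D)
    convert this using 1
    · rfl
    · rfl
    · rfl
    have haxne : a + x ≠ 0 := by positivity
    field_simp
    ring
  apply strictAntiOn_of_deriv_neg (convex_Ioi 0)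
  · exact fun x hx => (key x hx).continuousAt.continuousWithinAt
  · intro x hx
    rw [interior_Ioi] at hx
    rw [(key x hx).deriv]
    have hx0 : 0 < x := hx
    have hax : 0 < a + x := by positivity
    have hlt : a / (a + x) < Real.log (a * x⁻¹ + 1) := by
      have h1 : (0:ℝ) < x / (a + x) := by positivity
      have h2 : x / (a + x) ≠ 1 := by
        intro h
        have : x = a + x := by
          field_simp at h; linarith
        linarith
      have h3 := Real.log_lt_sub_one_of_pos h1 h2
      have h4 : Real.log (x / (a + x)) = Real.log x - Real.log (a + x) :=
        Real.log_div (ne_of_gt hx0) (ne_of_gt hax)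
      have h5 : Real.log (a * x⁻¹ + 1) = Real.log (a + x) - Real.log x := by
        have : a * x⁻¹ + 1 = (a + x) / x := by field_simp
        rw [this, Real.log_div (ne_of_gt hax) (ne_of_gt hx0)]
      have h6 : x / (a + x) - 1 = -(a / (a + x)) := by field_simp; ring
      rw [h4, h6] at h3
      rw [h5]; linarith
    nlinarith [mul_pos hk0 (sub_pos.mpr hlt)]
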